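/- Let Diagram 1 of abelian groups be given and let (X₁, i₁, j₁, m₁, n₁) be an extension of Diagram 1. Write E₁ = j₁(E), H₁ = i₁(H), P₁ = (i₁∘μ)(P) ⊆ X₁, let Y = F ×_Q G, and let α : Hom(R ⊕ S, P) → Ext¹(Q,P) be the connecting homomorphism from the short exact sequence 0 → R ⊕ S → Y → Q → 0. Assume: (a) α is surjective, and (b) every group homomorphism λ : E₁ + H₁ → P which vanishes on P₁ admits an extension to a homomorphism Λ : X₁ → P. Then for every extension (X₂, i₂, j₂, m₂, n₂) of Diagram 1 there exists a compatible isomorphism φ : X₁ → X₂, i.e., an isomorphism with φ∘i₁ = i₂, φ∘j₁ = j₂, m₂∘φ = m₁, and n₂∘φ = n₁. -/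

import Mathlib

universe u

open CategoryTheory

noncomputable instance : HasDerivedCategory.{max (u+1) u} AddCommGrpCat.{u} :=
  HasDerivedCategory.standard _

instance : HasExt.{max (u+1) u} AddCommGrpCat.{u} :=
  hasExt_of_hasDerivedCategory _

variable {F G Q R S : Type u}
  [AddCommGroup F] [AddCommGroup G] [AddCommGroup Q] [AddCommGroup R] [AddCommGroup S]

def pullbackSubgroup (πF : F →+ Q) (πG : G →+ Q) : AddSubgroup (F × G) where
  carrier := {p | πF p.1 = πG p.2}
  zero_mem' := by simp
  add_mem' := by
    intro a b ha hb
    simp only [Set.mem_setOf_eq, Prod.fst_add, Prod.snd_add, map_add] at *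
    rw [ha, hb]
  neg_mem' := by
    intro a ha
    simp only [Set.mem_setOf_eq, Prod.fst_neg, Prod.snd_neg, map_neg] at *
    rw [ha]

def iotaRS (ρ : R →+ F) (σ : S →+ G) (πF : F →+ Q) (πG : G →+ Q)
    (hkerF : AddMonoidHom.ker πF = AddMonoidHom.range ρ)
    (hkerG : AddMonoidHom.ker πG = AddMonoidHom.range σ) :
    R × S →+ pullbackSubgroup πF πG :=
  AddMonoidHom.codRestrict (AddMonoidHom.prodMap ρ σ) _ (by
    intro p
    have h1 : ρ p.1 ∈ AddMonoidHom.ker πF := by rw [hkerF]; exact ⟨p.1, rfl⟩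
    have h2 : σ p.2 ∈ AddMonoidHom.ker πG := by rw [hkerG]; exact ⟨p.2, rfl⟩
    show πF (ρ p.1) = πG (σ p.2)
    rw [AddMonoidHom.mem_ker] at h1 h2
    rw [h1, h2])

def piY (πF : F →+ Q) (πG : G →+ Q) : pullbackSubgroup πF πG →+ Q :=
  πF.comp ((AddMonoidHom.fst F G).comp (pullbackSubgroup πF πG).subtype)

/-- The short complex `R ⊕ S → Y → Q` in the category of abelian groups. -/
def pullbackShortComplex (ρ : R →+ F) (σ : S →+ G) (πF : F →+ Q) (πG : G →+ Q)
    (hkerF : AddMonoidHom.ker πF = AddMonoidHom.range ρ)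
    (hkerG : AddMonoidHom.ker πG = AddMonoidHom.range σ) :
    ShortComplex AddCommGrpCat.{u} :=
  ShortComplex.mk
    (AddCommGrpCat.ofHom (iotaRS ρ σ πF πG hkerF hkerG))
    (AddCommGrpCat.ofHom (piY πF πG))
    (by
      ext p
      show πF (ρ p.1) = 0
      have h1 : ρ p.1 ∈ AddMonoidHom.ker πF := by rw [hkerF]; exact ⟨p.1, rfl⟩
      rwa [AddMonoidHom.mem_ker] at h1)

/-- The sequence `0 → R ⊕ S → Y → Q → 0` is short exact. -/
lemma pullbackShortComplex_shortExact
    (ρ : R →+ F) (σ : S →+ G) (πF : F →+ Q) (πG : G →+ Q)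
    (hρ : Function.Injective ρ) (hσ : Function.Injective σ)
    (hπF : Function.Surjective πF) (hπG : Function.Surjective πG)
    (hkerF : AddMonoidHom.ker πF = AddMonoidHom.range ρ)
    (hkerG : AddMonoidHom.ker πG = AddMonoidHom.range σ) :
    (pullbackShortComplex ρ σ πF πG hkerF hkerG).ShortExact where
  exact := by
    rw [ShortComplex.ab_exact_iff]
    intro y hy
    obtain ⟨⟨yf, yg⟩, hymem⟩ := y
    have hymem' : πF yf = πG yg := hymem
    have hy' : πF yf = 0 := hy
    have h1 : yf ∈ AddMonoidHom.ker πF := hy'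
    rw [hkerF] at h1
    obtain ⟨r, hr⟩ := h1
    have h2 : yg ∈ AddMonoidHom.ker πG := by
      rw [AddMonoidHom.mem_ker, ← hymem']; exact hy'
    rw [hkerG] at h2
    obtain ⟨s, hs⟩ := h2
    exact ⟨(r, s), Subtype.ext (Prod.ext hr hs)⟩
  mono_f := by
    rw [AddCommGrpCat.mono_iff_injective]
    intro a b hab
    have h1 : (ρ.prodMap σ) a = (ρ.prodMap σ) b := congrArg Subtype.val hab
    have h2 : ρ a.1 = ρ b.1 := congrArg Prod.fst h1
    have h3 : σ a.2 = σ b.2 := congrArg Prod.snd h1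
    exact Prod.ext (hρ h2) (hσ h3)
  epi_g := by
    rw [AddCommGrpCat.epi_iff_surjective]
    intro q
    obtain ⟨f, hf⟩ := hπF q
    obtain ⟨g, hg⟩ := hπG q
    exact ⟨⟨(f, g), hf.trans hg.symm⟩, hf⟩

open Abelian in
/-- The connecting homomorphism `α : Hom(R ⊕ S, P) → Ext¹(Q, P)` obtained by applying
`Hom(−, P)` to the short exact sequence `0 → R ⊕ S → Y → Q → 0`; it is given by the
Yoneda composition of the extension class of this sequence with a homomorphism. -/
noncomputable def alphaMap {P : Type u} [AddCommGroup P]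
    (ρ : R →+ F) (σ : S →+ G) (πF : F →+ Q) (πG : G →+ Q)
    (hρ : Function.Injective ρ) (hσ : Function.Injective σ)
    (hπF : Function.Surjective πF) (hπG : Function.Surjective πG)
    (hkerF : AddMonoidHom.ker πF = AddMonoidHom.range ρ)
    (hkerG : AddMonoidHom.ker πG = AddMonoidHom.range σ) :
    (R × S →+ P) → Ext (AddCommGrpCat.of Q) (AddCommGrpCat.of P) 1 :=
  fun lam =>
    (pullbackShortComplex_shortExact ρ σ πF πG hρ hσ hπF hπG hkerF hkerG).extClass.comp
      (Ext.mk₀ (AddCommGrpCat.ofHom lam)) (add_zero 1)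


section Helpers

variable {A B C'' : Type*} [AddCommGroup A] [AddCommGroup B] [AddCommGroup C'']

/-- Descend a homomorphism along a surjection whose kernel it kills. -/
noncomputable def descendHom (f : A →+ B) (hf : Function.Surjective f) (g : A →+ C'')
    (hg : ∀ a, f a = 0 → g a = 0) : B →+ C'' :=
  f.liftOfRightInverse (Function.surjInv hf) (Function.rightInverse_surjInv hf)
    ⟨g, fun a ha => AddMonoidHom.mem_ker.2
      (hg a (AddMonoidHom.mem_ker.1 ha))⟩

lemma descendHom_apply (f : A →+ B) (hf : Function.Surjective f) (g : A →+ C'')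
    (hg : ∀ a, f a = 0 → g a = 0) (a : A) :
    descendHom f hf g hg (f a) = g a :=
  f.liftOfRightInverse_comp_apply _ _ _ a

end Helpers

section ExtLemmas

variable {F G Q R S P E H X : Type u}
  [AddCommGroup F] [AddCommGroup G] [AddCommGroup Q] [AddCommGroup R] [AddCommGroup S]
  [AddCommGroup P] [AddCommGroup E] [AddCommGroup H] [AddCommGroup X]

/-- Kernel of `(m,n)` is the image of `i ∘ μ`. -/
lemma ext_ker (σ : S →+ G) (μ : P →+ H) (πH : H →+ S)
    (i : H →+ X) (m : X →+ F) (n : X →+ G)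
    (hσ : Function.Injective σ)
    (hcol1 : AddMonoidHom.ker πH = AddMonoidHom.range μ)
    (hmid : AddMonoidHom.ker m = AddMonoidHom.range i)
    (hsq3 : n.comp i = σ.comp πH) :
    ∀ x, m x = 0 → n x = 0 → ∃ p, x = i (μ p) := by
  intro x hmx hnx
  have hx : x ∈ AddMonoidHom.ker m := hmx
  rw [hmid] at hx
  obtain ⟨h, rfl⟩ := hx
  have h1 : σ (πH h) = 0 := by
    have := DFunLike.congr_fun hsq3 h
    simp only [AddMonoidHom.comp_apply] at this
    rw [← this, hnx]
  have h2 : πH h = 0 := hσ (by rw [h1, map_zero])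
  have h3 : h ∈ AddMonoidHom.ker πH := h2
  rw [hcol1] at h3
  obtain ⟨p, rfl⟩ := h3
  exact ⟨p, rfl⟩

/-- Surjectivity of `(m,n)` onto the pullback. -/
lemma ext_surj (σ : S →+ G) (πG : G →+ Q) (πH : H →+ S) (πF : F →+ Q)
    (i : H →+ X) (m : X →+ F) (n : X →+ G)
    (hπH : Function.Surjective πH)
    (hrow2 : AddMonoidHom.ker πG = AddMonoidHom.range σ)
    (hm : Function.Surjective m)
    (hmid : AddMonoidHom.ker m = AddMonoidHom.range i)
    (hsq3 : n.comp i = σ.comp πH)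
    (hsq4 : πF.comp m = πG.comp n) :
    ∀ f g, πF f = πG g → ∃ x, m x = f ∧ n x = g := by
  intro f g hfg
  obtain ⟨x, rfl⟩ := hm f
  have h1 : πG (g - n x) = 0 := by
    have := DFunLike.congr_fun hsq4 x
    simp only [AddMonoidHom.comp_apply] at this
    rw [map_sub, ← this, hfg, sub_self]
  have h2 : g - n x ∈ AddMonoidHom.ker πG := h1
  rw [hrow2] at h2
  obtain ⟨s, hs⟩ := h2
  obtain ⟨h, rfl⟩ := hπH s
  refine ⟨x + i h, ?_, ?_⟩
  · have : i h ∈ AddMonoidHom.ker m := by rw [hmid]; exact ⟨h, rfl⟩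
    rw [map_add, this, add_zero]
  · have := DFunLike.congr_fun hsq3 h
    simp only [AddMonoidHom.comp_apply] at this
    rw [map_add, this, hs, add_sub_cancel]

/-- Elements whose image lies over `ι(R⊕S)` decompose as `j e + i h`. -/
lemma ext_decomp (σ : S →+ G) (πE : E →+ R) (πH : H →+ S) (ρ : R →+ F)
    (i : H →+ X) (j : E →+ X) (m : X →+ F) (n : X →+ G)
    (hσ : Function.Injective σ) (hπE : Function.Surjective πE)
    (hmidrow : AddMonoidHom.ker m = AddMonoidHom.range i)
    (hmidcol : AddMonoidHom.ker n = AddMonoidHom.range j)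
    (hsq2 : m.comp j = ρ.comp πE)
    (hsq3 : n.comp i = σ.comp πH) :
    ∀ x r s, m x = ρ r → n x = σ s → ∃ e hh, x = j e + i hh ∧ πE e = r ∧ πH hh = s := by
  intro x r s hmx hnx
  obtain ⟨e, rfl⟩ := hπE r
  have hmj : m (j e) = ρ (πE e) := by
    have := DFunLike.congr_fun hsq2 e
    simpa only [AddMonoidHom.comp_apply] using this
  have h1 : x - j e ∈ AddMonoidHom.ker m := by
    show m (x - j e) = 0
    rw [map_sub, hmx, hmj, sub_self]
  rw [hmidrow] at h1
  obtain ⟨hh, hhh⟩ := h1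
  have hnj : n (j e) = 0 := by
    have : j e ∈ AddMonoidHom.ker n := by rw [hmidcol]; exact ⟨e, rfl⟩
    exact this
  have h2 : σ (πH hh) = σ s := by
    have h3 := DFunLike.congr_fun hsq3 hh
    simp only [AddMonoidHom.comp_apply] at h3
    rw [← h3, hhh, map_sub, hnx, hnj, sub_zero]
  exact ⟨e, hh, by rw [hhh]; abel, rfl, hσ h2⟩

end ExtLemmas

open CategoryTheory.Abelian DerivedCategory in
/-- Natural isomorphism `singleFunctor ⋙ homologyFunctor ≅ 𝟭` for the derived category. -/
noncomputable def singleHomologyIso :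
    DerivedCategory.singleFunctor AddCommGrpCat.{u} 0 ⋙
      DerivedCategory.homologyFunctor AddCommGrpCat.{u} 0 ≅ 𝟭 _ :=
  Functor.isoWhiskerRight ((SingleFunctors.evaluation _ _ 0).mapIso
      (DerivedCategory.singleFunctorsPostcompQIso AddCommGrpCat.{u}))
    (DerivedCategory.homologyFunctor AddCommGrpCat.{u} 0) ≪≫
  Functor.associator _ _ _ ≪≫
  Functor.isoWhiskerLeft (CochainComplex.singleFunctor AddCommGrpCat.{u} 0)
    (DerivedCategory.homologyFunctorFactors AddCommGrpCat.{u} 0) ≪≫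
  HomologicalComplex.homologyFunctorSingleIso AddCommGrpCat.{u} _ 0

open CategoryTheory.Abelian DerivedCategory in
lemma exists_section_of_extClass_eq_zero {S : ShortComplex AddCommGrpCat.{u}}
    (hS : S.ShortExact) (hz : hS.extClass = 0) :
    ∃ s : S.X₃ ⟶ S.X₂, s ≫ S.g = 𝟙 S.X₃ := by
  have h3 : hS.singleTriangle.mor₃ = 0 := by
    have : hS.extClass.hom = hS.singleδ := hS.extClass_hom
    rw [hz, Abelian.Ext.zero_hom] at this
    exact this.symm
  obtain ⟨s', hs'⟩ := Pretriangulated.Triangle.coyoneda_exact₃ _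
    hS.singleTriangle_distinguished (𝟙 _) (by rw [h3, Limits.comp_zero])
  change ((DerivedCategory.singleFunctor AddCommGrpCat.{u} 0).obj S.X₃ ⟶
    (DerivedCategory.singleFunctor AddCommGrpCat.{u} 0).obj S.X₂) at s'
  replace hs' : 𝟙 _ = s' ≫ (DerivedCategory.singleFunctor AddCommGrpCat.{u} 0).map S.g := hs'
  set H := DerivedCategory.homologyFunctor AddCommGrpCat.{u} 0
  set ε := singleHomologyIso.{u}
  refine ⟨ε.inv.app S.X₃ ≫ H.map s' ≫ ε.hom.app S.X₂, ?_⟩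
  have hnat : ε.hom.app S.X₂ ≫ S.g =
      H.map ((DerivedCategory.singleFunctor AddCommGrpCat.{u} 0).map S.g) ≫ ε.hom.app S.X₃ := by
    simpa using (ε.hom.naturality S.g).symm
  have hmor₂ : hS.singleTriangle.mor₂ =
      (DerivedCategory.singleFunctor AddCommGrpCat.{u} 0).map S.g := rfl
  rw [Category.assoc, Category.assoc, hnat, ← Category.assoc (H.map s'), ← H.map_comp,
    ← hs']
  simp
open Abelian in
/-- (One direction of Proposition `finaluniqueness` of the note.) Let `(X₁, i₁, j₁, m₁, n₁)`
be an extension of Diagram 1 of abelian groups. If (a) the connecting homomorphism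
`α : Hom(R ⊕ S, P) → Ext¹(Q,P)` of `0 → R ⊕ S → Y → Q → 0` (with `Y = F ×_Q G`) is
surjective, and (b) every homomorphism `λ : E₁ + H₁ → P` (where `E₁ = j₁(E)`, `H₁ = i₁(H)`)
vanishing on `P₁ = (i₁∘μ)(P)` extends to a homomorphism `Λ : X₁ → P`, then every extension
`(X₂, i₂, j₂, m₂, n₂)` of Diagram 1 admits a compatible isomorphism `φ : X₁ → X₂`, i.e.
`φ∘i₁ = i₂`, `φ∘j₁ = j₂`, `m₂∘φ = m₁`, `n₂∘φ = n₁`. -/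
theorem compatible_iso_of_alpha_surjective_and_extension_property
    {P E H X₁ : Type u} [AddCommGroup P] [AddCommGroup E] [AddCommGroup H] [AddCommGroup X₁]
    -- row 1 : 0 → P → E → R → 0
    (ν : P →+ E) (πE : E →+ R)
    (hν : Function.Injective ν) (hπE : Function.Surjective πE)
    (hrow1 : AddMonoidHom.ker πE = AddMonoidHom.range ν)
    -- row 2 : 0 → S → G → Q → 0
    (σ : S →+ G) (πG : G →+ Q)
    (hσ : Function.Injective σ) (hπG : Function.Surjective πG)
    (hrow2 : AddMonoidHom.ker πG = AddMonoidHom.range σ)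
    -- column 1 : 0 → P → H → S → 0
    (μ : P →+ H) (πH : H →+ S)
    (hμ : Function.Injective μ) (hπH : Function.Surjective πH)
    (hcol1 : AddMonoidHom.ker πH = AddMonoidHom.range μ)
    -- column 2 : 0 → R → F → Q → 0
    (ρ : R →+ F) (πF : F →+ Q)
    (hρ : Function.Injective ρ) (hπF : Function.Surjective πF)
    (hcol2 : AddMonoidHom.ker πF = AddMonoidHom.range ρ)
    -- the extension (X₁, i₁, j₁, m₁, n₁) of Diagram 1
    (i₁ : H →+ X₁) (j₁ : E →+ X₁) (m₁ : X₁ →+ F) (n₁ : X₁ →+ G)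
    (hi₁ : Function.Injective i₁) (hm₁ : Function.Surjective m₁)
    (hmidrow₁ : AddMonoidHom.ker m₁ = AddMonoidHom.range i₁)
    (hj₁ : Function.Injective j₁) (hn₁ : Function.Surjective n₁)
    (hmidcol₁ : AddMonoidHom.ker n₁ = AddMonoidHom.range j₁)
    (hsq1₁ : i₁.comp μ = j₁.comp ν)
    (hsq2₁ : m₁.comp j₁ = ρ.comp πE)
    (hsq3₁ : n₁.comp i₁ = σ.comp πH)
    (hsq4₁ : πF.comp m₁ = πG.comp n₁)
    -- (a) : the connecting homomorphism α is surjective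
    (halpha : Function.Surjective
      (alphaMap (P := P) ρ σ πF πG hρ hσ hπF hπG hcol2 hrow2))
    -- (b) : every homomorphism λ : E₁ + H₁ → P vanishing on P₁ extends to X₁
    (hext : ∀ lam : ↥(AddMonoidHom.range j₁ ⊔ AddMonoidHom.range i₁ : AddSubgroup X₁) →+ P,
      (∀ x : ↥(AddMonoidHom.range j₁ ⊔ AddMonoidHom.range i₁ : AddSubgroup X₁),
          (x : X₁) ∈ AddMonoidHom.range (i₁.comp μ) → lam x = 0) →
      ∃ Lam : X₁ →+ P,
        ∀ x : ↥(AddMonoidHom.range j₁ ⊔ AddMonoidHom.range i₁ : AddSubgroup X₁),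
          Lam (x : X₁) = lam x) :
    -- conclusion : every extension (X₂, i₂, j₂, m₂, n₂) admits a compatible isomorphism
    ∀ (X₂ : Type u) [AddCommGroup X₂]
      (i₂ : H →+ X₂) (j₂ : E →+ X₂) (m₂ : X₂ →+ F) (n₂ : X₂ →+ G),
      Function.Injective i₂ → Function.Surjective m₂ →
      AddMonoidHom.ker m₂ = AddMonoidHom.range i₂ →
      Function.Injective j₂ → Function.Surjective n₂ →
      AddMonoidHom.ker n₂ = AddMonoidHom.range j₂ →
      i₂.comp μ = j₂.comp ν →
      m₂.comp j₂ = ρ.comp πE →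
      n₂.comp i₂ = σ.comp πH →
      πF.comp m₂ = πG.comp n₂ →
      ∃ φ : X₁ ≃+ X₂,
        (∀ h : H, φ (i₁ h) = i₂ h) ∧
        (∀ e : E, φ (j₁ e) = j₂ e) ∧
        (∀ x : X₁, m₂ (φ x) = m₁ x) ∧
        (∀ x : X₁, n₂ (φ x) = n₁ x) := by
  intro X₂ _ i₂ j₂ m₂ n₂ hi₂ hm₂ hmidrow₂ hj₂ hn₂ hmidcol₂ hsq1₂ hsq2₂ hsq3₂ hsq4₂
  -- pointwise commutation facts
  have hij₁ : ∀ p, i₁ (μ p) = j₁ (ν p) := fun p => DFunLike.congr_fun hsq1₁ p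
  have hij₂ : ∀ p, i₂ (μ p) = j₂ (ν p) := fun p => DFunLike.congr_fun hsq1₂ p
  have hmj₁ : ∀ e, m₁ (j₁ e) = ρ (πE e) := fun e => DFunLike.congr_fun hsq2₁ e
  have hmj₂ : ∀ e, m₂ (j₂ e) = ρ (πE e) := fun e => DFunLike.congr_fun hsq2₂ e
  have hni₁ : ∀ h, n₁ (i₁ h) = σ (πH h) := fun h => DFunLike.congr_fun hsq3₁ h
  have hni₂ : ∀ h, n₂ (i₂ h) = σ (πH h) := fun h => DFunLike.congr_fun hsq3₂ h
  have hmi₁ : ∀ h, m₁ (i₁ h) = 0 := fun h => by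
    have : i₁ h ∈ AddMonoidHom.ker m₁ := by rw [hmidrow₁]; exact ⟨h, rfl⟩
    exact this
  have hmi₂ : ∀ h, m₂ (i₂ h) = 0 := fun h => by
    have : i₂ h ∈ AddMonoidHom.ker m₂ := by rw [hmidrow₂]; exact ⟨h, rfl⟩
    exact this
  have hnj₁ : ∀ e, n₁ (j₁ e) = 0 := fun e => by
    have : j₁ e ∈ AddMonoidHom.ker n₁ := by rw [hmidcol₁]; exact ⟨e, rfl⟩
    exact this
  have hnj₂ : ∀ e, n₂ (j₂ e) = 0 := fun e => by
    have : j₂ e ∈ AddMonoidHom.ker n₂ := by rw [hmidcol₂]; exact ⟨e, rfl⟩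
    exact this
  have hπHμ : ∀ p, πH (μ p) = 0 := fun p => by
    have : μ p ∈ AddMonoidHom.ker πH := by rw [hcol1]; exact ⟨p, rfl⟩
    exact this
  have hπFρ : ∀ r, πF (ρ r) = 0 := fun r => by
    have : ρ r ∈ AddMonoidHom.ker πF := by rw [hcol2]; exact ⟨r, rfl⟩
    exact this
  have hπGσ : ∀ s, πG (σ s) = 0 := fun s => by
    have : σ s ∈ AddMonoidHom.ker πG := by rw [hrow2]; exact ⟨s, rfl⟩
    exact this
  have hn₁iμ : ∀ p, n₁ (i₁ (μ p)) = 0 := fun p => by rw [hni₁, hπHμ, map_zero]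
  have hn₂iμ : ∀ p, n₂ (i₂ (μ p)) = 0 := fun p => by rw [hni₂, hπHμ, map_zero]
  -- kernel and surjectivity facts for both extensions
  have hker₁ := ext_ker σ μ πH i₁ m₁ n₁ hσ hcol1 hmidrow₁ hsq3₁
  have hker₂ := ext_ker σ μ πH i₂ m₂ n₂ hσ hcol1 hmidrow₂ hsq3₂
  have hsurj₁ := ext_surj σ πG πH πF i₁ m₁ n₁ hπH hrow2 hm₁ hmidrow₁ hsq3₁ hsq4₁
  have hsurj₂ := ext_surj σ πG πH πF i₂ m₂ n₂ hπH hrow2 hm₂ hmidrow₂ hsq3₂ hsq4₂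
  have hdec₁ := ext_decomp σ πE πH ρ i₁ j₁ m₁ n₁ hσ hπE hmidrow₁ hmidcol₁ hsq2₁ hsq3₁
  have hiμinj₂ : Function.Injective (i₂.comp μ) := fun a b hab => hμ (hi₂ hab)
  -- the two maps to the pullback
  let Yt : AddSubgroup (F × G) := pullbackSubgroup πF πG
  let ψ₁ : X₁ →+ ↥Yt := AddMonoidHom.codRestrict (m₁.prod n₁) _
    (fun x => show πF (m₁ x) = πG (n₁ x) from DFunLike.congr_fun hsq4₁ x)
  let ψ₂ : X₂ →+ ↥Yt := AddMonoidHom.codRestrict (m₂.prod n₂) _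
    (fun x => show πF (m₂ x) = πG (n₂ x) from DFunLike.congr_fun hsq4₂ x)
  have hψ₁ : ∀ x, (ψ₁ x : F × G) = (m₁ x, n₁ x) := fun x => rfl
  have hψ₂ : ∀ x, (ψ₂ x : F × G) = (m₂ x, n₂ x) := fun x => rfl
  have hψ₁surj : Function.Surjective ψ₁ := by
    rintro ⟨⟨f, g⟩, hfg⟩
    obtain ⟨x, hx1, hx2⟩ := hsurj₁ f g hfg
    exact ⟨x, Subtype.ext (Prod.ext hx1 hx2)⟩
  have hψ₁ker : ∀ x, ψ₁ x = 0 → ∃ p, x = i₁ (μ p) := by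
    intro x hx
    have h1 : m₁ x = 0 := congrArg Prod.fst (congrArg Subtype.val hx)
    have h2 : n₁ x = 0 := congrArg Prod.snd (congrArg Subtype.val hx)
    exact hker₁ x h1 h2
  have hψ₁iμ : ∀ p, ψ₁ (i₁ (μ p)) = 0 := fun p =>
    Subtype.ext (Prod.ext (hmi₁ (μ p)) (hn₁iμ p))
  -- the Baer difference group D
  let D₀ : AddSubgroup (X₁ × X₂) :=
    { carrier := {z | m₁ z.1 = m₂ z.2 ∧ n₁ z.1 = n₂ z.2}
      zero_mem' := by simp
      add_mem' := fun {a b} ha hb => ⟨by simp only [Prod.fst_add, Prod.snd_add, map_add,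
          ha.1, hb.1], by simp only [Prod.fst_add, Prod.snd_add, map_add, ha.2, hb.2]⟩
      neg_mem' := fun {a} ha => ⟨by simp only [Prod.fst_neg, Prod.snd_neg, map_neg, ha.1],
        by simp only [Prod.fst_neg, Prod.snd_neg, map_neg, ha.2]⟩ }
  have hD₀mem : ∀ z : X₁ × X₂, z ∈ D₀ ↔ (m₁ z.1 = m₂ z.2 ∧ n₁ z.1 = n₂ z.2) := fun z => Iff.rfl
  let prD₁ : ↥D₀ →+ X₁ := (AddMonoidHom.fst X₁ X₂).comp D₀.subtype
  let prD₂ : ↥D₀ →+ X₂ := (AddMonoidHom.snd X₁ X₂).comp D₀.subtype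
  have memν : ∀ p : P, ((i₁.comp μ).prod (i₂.comp μ)) p ∈ D₀ := fun p =>
    ⟨show m₁ (i₁ (μ p)) = m₂ (i₂ (μ p)) by rw [hmi₁, hmi₂],
     show n₁ (i₁ (μ p)) = n₂ (i₂ (μ p)) by rw [hn₁iμ, hn₂iμ]⟩
  let νD : P →+ ↥D₀ := AddMonoidHom.codRestrict ((i₁.comp μ).prod (i₂.comp μ)) _ memν
  have hνD : ∀ p, (νD p : X₁ × X₂) = (i₁ (μ p), i₂ (μ p)) := fun p => rfl
  let D := ↥D₀ ⧸ AddMonoidHom.range νD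
  let qD : ↥D₀ →+ D := QuotientAddGroup.mk' _
  have hqDsurj : Function.Surjective qD := QuotientAddGroup.mk'_surjective _
  have hqD0 : ∀ z : ↥D₀, qD z = 0 ↔ z ∈ AddMonoidHom.range νD := fun z =>
    QuotientAddGroup.eq_zero_iff z
  have memfD : ∀ p : P, (((0 : P →+ X₁)).prod (i₂.comp μ)) p ∈ D₀ := fun p =>
    ⟨show m₁ 0 = m₂ (i₂ (μ p)) by rw [map_zero, hmi₂],
     show n₁ 0 = n₂ (i₂ (μ p)) by rw [map_zero, hn₂iμ]⟩
  let e₂D : P →+ ↥D₀ := AddMonoidHom.codRestrict ((0 : P →+ X₁).prod (i₂.comp μ)) _ memfD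
  have he₂D : ∀ p, (e₂D p : X₁ × X₂) = (0, i₂ (μ p)) := fun p => rfl
  let fD : P →+ D := qD.comp e₂D
  have gDker : ∀ z ∈ AddMonoidHom.range νD, (ψ₁.comp prD₁) z = 0 := by
    rintro z ⟨p, rfl⟩
    show ψ₁ (i₁ (μ p)) = 0
    exact hψ₁iμ p
  let gD : D →+ ↥Yt := QuotientAddGroup.lift _ (ψ₁.comp prD₁)
    (fun z hz => AddMonoidHom.mem_ker.2 (gDker z hz))
  have hgDq : ∀ z : ↥D₀, gD (qD z) = ψ₁ (prD₁ z) := fun z => rfl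
  have hfDinj : Function.Injective fD := by
    intro a b hab
    have h1 : e₂D (a - b) ∈ AddMonoidHom.range νD := by
      rw [← hqD0]
      show fD (a - b) = 0
      rw [map_sub, hab, sub_self]
    obtain ⟨p, hp⟩ := h1
    have hval : (i₁ (μ p), i₂ (μ p)) = ((0 : X₁), i₂ (μ (a - b))) := congrArg Subtype.val hp
    have h2 : i₁ (μ p) = 0 := congrArg Prod.fst hval
    have hμp : μ p = 0 := hi₁ (by rw [h2, map_zero])
    have h3 : i₂ (μ p) = i₂ (μ (a - b)) := congrArg Prod.snd hval
    have h4 : μ (a - b) = 0 := hi₂ (by rw [← h3, hμp])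
    have h5 : a - b = 0 := hμ (by rw [h4, map_zero])
    exact sub_eq_zero.1 h5
  have hgDsurj : Function.Surjective gD := by
    intro y
    obtain ⟨x, hx⟩ := hψ₁surj y
    obtain ⟨b, hb1, hb2⟩ := hsurj₂ (m₁ x) (n₁ x) (DFunLike.congr_fun hsq4₁ x)
    refine ⟨qD ⟨(x, b), ⟨hb1.symm, hb2.symm⟩⟩, ?_⟩
    rw [hgDq]
    exact hx
  have hgDfD : ∀ p, gD (fD p) = 0 := by
    intro p
    show gD (qD (e₂D p)) = 0
    rw [hgDq]
    show ψ₁ 0 = 0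
    exact map_zero _
  have hexactD : ∀ d : D, gD d = 0 → ∃ p, fD p = d := by
    intro d hd
    obtain ⟨z, rfl⟩ := hqDsurj d
    rw [hgDq] at hd
    obtain ⟨p, hp⟩ := hψ₁ker (prD₁ z) hd
    -- z - νD p has first coordinate 0
    have hz1 : (z : X₁ × X₂).1 = i₁ (μ p) := hp
    have hmem2 : m₂ ((z : X₁ × X₂).2 - i₂ (μ p)) = 0 := by
      rw [map_sub, hmi₂, sub_zero, ← z.2.1, hz1, hmi₁]
    have hmem2' : n₂ ((z : X₁ × X₂).2 - i₂ (μ p)) = 0 := by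
      rw [map_sub, hn₂iμ, sub_zero, ← z.2.2, hz1, hn₁iμ]
    obtain ⟨q, hq⟩ := hker₂ _ hmem2 hmem2'
    refine ⟨q, ?_⟩
    have hzeq : z = e₂D q + νD p := by
      apply Subtype.ext
      apply Prod.ext
      · show (z : X₁ × X₂).1 = 0 + i₁ (μ p)
        rw [zero_add, hz1]
      · show (z : X₁ × X₂).2 = i₂ (μ q) + i₂ (μ p)
        rw [← hq]
        abel
    show qD (e₂D q) = qD z
    rw [hzeq, map_add]
    have : qD (νD p) = 0 := (hqD0 _).2 ⟨p, rfl⟩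
    rw [this, add_zero]
  -- the short complex 0 → P → D → Y → 0
  let Dcx : ShortComplex AddCommGrpCat.{u} :=
    ShortComplex.mk (AddCommGrpCat.ofHom fD) (AddCommGrpCat.ofHom gD) (by
      ext p : 2
      exact hgDfD p)
  have hDcx : Dcx.ShortExact :=
    { exact := by
        rw [ShortComplex.ab_exact_iff]
        intro d hd
        exact hexactD d hd
      mono_f := (AddCommGrpCat.mono_iff_injective _).2 hfDinj
      epi_g := (AddCommGrpCat.epi_iff_surjective _).2 hgDsurj }
  -- the pullback short exact sequence T
  let T : ShortComplex AddCommGrpCat.{u} := pullbackShortComplex ρ σ πF πG hcol2 hrow2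
  have hT : T.ShortExact := pullbackShortComplex_shortExact ρ σ πF πG hρ hσ hπF hπG hcol2 hrow2
  have hιval : ∀ w : R × S, ((iotaRS ρ σ πF πG hcol2 hrow2) w : F × G) = (ρ w.1, σ w.2) :=
    fun w => rfl
  -- the splitting of D over R ⊕ S
  let τ₀ : E × H →+ X₁ × X₂ :=
    ((j₁.comp (AddMonoidHom.fst E H)) + (i₁.comp (AddMonoidHom.snd E H))).prod
      ((j₂.comp (AddMonoidHom.fst E H)) + (i₂.comp (AddMonoidHom.snd E H)))
  have memτ : ∀ z : E × H, τ₀ z ∈ D₀ := by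
    rintro ⟨e, h⟩
    constructor
    · show m₁ (j₁ e + i₁ h) = m₂ (j₂ e + i₂ h)
      rw [map_add, map_add, hmi₁, hmi₂, hmj₁, hmj₂]
    · show n₁ (j₁ e + i₁ h) = n₂ (j₂ e + i₂ h)
      rw [map_add, map_add, hnj₁, hnj₂, hni₁, hni₂]
  let τ' : E × H →+ ↥D₀ := AddMonoidHom.codRestrict τ₀ _ memτ
  let τ'' : E × H →+ D := qD.comp τ'
  have hEHsurj : Function.Surjective (πE.prodMap πH) := by
    rintro ⟨r, t⟩
    obtain ⟨e, he⟩ := hπE r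
    obtain ⟨h, hh⟩ := hπH t
    exact ⟨(e, h), Prod.ext he hh⟩
  have hkτ : ∀ z : E × H, (πE.prodMap πH) z = 0 → τ'' z = 0 := by
    rintro ⟨e, h⟩ hz
    have he : πE e = 0 := congrArg Prod.fst hz
    have hh : πH h = 0 := congrArg Prod.snd hz
    have he' : e ∈ AddMonoidHom.ker πE := he
    rw [hrow1] at he'
    obtain ⟨p, rfl⟩ := he'
    have hh' : h ∈ AddMonoidHom.ker πH := hh
    rw [hcol1] at hh'
    obtain ⟨q, rfl⟩ := hh'
    have hτν : τ' (ν p, μ q) = νD (p + q) := by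
      apply Subtype.ext
      apply Prod.ext
      · show j₁ (ν p) + i₁ (μ q) = i₁ (μ (p + q))
        rw [← hij₁, map_add, map_add]
      · show j₂ (ν p) + i₂ (μ q) = i₂ (μ (p + q))
        rw [← hij₂, map_add, map_add]
    show qD (τ' (ν p, μ q)) = 0
    rw [hτν]
    exact (hqD0 _).2 ⟨p + q, rfl⟩
  let τ : R × S →+ D := descendHom (πE.prodMap πH) hEHsurj τ'' hkτ
  have hτ : ∀ w : R × S, gD (τ w) = (iotaRS ρ σ πF πG hcol2 hrow2) w := by
    intro w
    obtain ⟨⟨e, h⟩, rfl⟩ := hEHsurj w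
    rw [descendHom_apply]
    show gD (qD (τ' (e, h))) = _
    rw [hgDq]
    apply Subtype.ext
    apply Prod.ext
    · show m₁ (j₁ e + i₁ h) = ρ (πE e)
      rw [map_add, hmi₁, hmj₁, add_zero]
    · show n₁ (j₁ e + i₁ h) = σ (πH h)
      rw [map_add, hnj₁, hni₁, zero_add]
  -- decomposition of the subgroup E₁ + H₁
  let Z₁ : AddSubgroup X₁ := AddMonoidHom.range j₁ ⊔ AddMonoidHom.range i₁
  let Φ₁ : E × H →+ X₁ := (j₁.comp (AddMonoidHom.fst E H)) + (i₁.comp (AddMonoidHom.snd E H))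
  have hΦ₁ : ∀ z : E × H, Φ₁ z = j₁ z.1 + i₁ z.2 := fun z => rfl
  have memΦ : ∀ z : E × H, Φ₁ z ∈ Z₁ := fun z =>
    AddSubgroup.add_mem _ ((le_sup_left : AddMonoidHom.range j₁ ≤ Z₁) ⟨z.1, rfl⟩)
      ((le_sup_right : AddMonoidHom.range i₁ ≤ Z₁) ⟨z.2, rfl⟩)
  let Φ' : E × H →+ ↥Z₁ := AddMonoidHom.codRestrict Φ₁ _ memΦ
  have hΦ'surj : Function.Surjective Φ' := by
    rintro ⟨x, hx⟩
    rw [AddSubgroup.mem_sup] at hx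
    obtain ⟨a, ⟨e, rfl⟩, b, ⟨h, rfl⟩, hab⟩ := hx
    exact ⟨(e, h), Subtype.ext hab⟩
  have hΦ'ker : ∀ z : E × H, Φ' z = 0 → ∃ p, z = (ν p, -μ p) := by
    rintro ⟨e, h⟩ hz
    have h0 : j₁ e + i₁ h = 0 := congrArg Subtype.val hz
    have hm0 : ρ (πE e) = 0 := by
      rw [← hmj₁]
      have : m₁ (j₁ e + i₁ h) = 0 := by rw [h0, map_zero]
      rw [map_add, hmi₁, add_zero] at this
      exact this
    have hπEe : πE e = 0 := hρ (by rw [hm0, map_zero])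
    have he' : e ∈ AddMonoidHom.ker πE := hπEe
    rw [hrow1] at he'
    obtain ⟨p, rfl⟩ := he'
    have hi : i₁ (μ p + h) = 0 := by
      rw [map_add, hij₁, h0]
    have : μ p + h = 0 := hi₁ (by rw [hi, map_zero])
    exact ⟨p, Prod.ext rfl (by rw [← neg_eq_of_add_eq_zero_right this])⟩
  -- consequence of hypothesis (b) : every hom R × S → P extends along ι to Y
  have hLam : ∀ lam : R × S →+ P, ∃ Lbar : ↥Yt →+ P,
      ∀ w : R × S, Lbar ((iotaRS ρ σ πF πG hcol2 hrow2) w) = lam w := by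
    intro lam
    let lamEH : E × H →+ P := lam.comp (πE.prodMap πH)
    have hklam : ∀ z : E × H, Φ' z = 0 → lamEH z = 0 := by
      intro z hz
      obtain ⟨p, rfl⟩ := hΦ'ker z hz
      show lam (πE (ν p), πH (-μ p)) = 0
      have h1 : πE (ν p) = 0 := by
        have : ν p ∈ AddMonoidHom.ker πE := by rw [hrow1]; exact ⟨p, rfl⟩
        exact this
      have h2 : πH (-μ p) = 0 := by rw [map_neg, hπHμ, neg_zero]
      rw [h1, h2]
      exact map_zero _
    let lamZ : ↥Z₁ →+ P := descendHom Φ' hΦ'surj lamEH hklam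
    have hvanish : ∀ x : ↥Z₁, (x : X₁) ∈ AddMonoidHom.range (i₁.comp μ) → lamZ x = 0 := by
      rintro x ⟨p, hp⟩
      have hx : x = Φ' (0, μ p) := by
        apply Subtype.ext
        show (x : X₁) = j₁ 0 + i₁ (μ p)
        rw [map_zero, zero_add, ← hp]
        rfl
      rw [hx]
      show lamZ (Φ' (0, μ p)) = 0
      rw [descendHom_apply]
      show lam (πE 0, πH (μ p)) = 0
      rw [map_zero, hπHμ]
      exact map_zero _
    obtain ⟨Lam, hLamZ⟩ := hext lamZ hvanish
    have hkill : ∀ x, ψ₁ x = 0 → Lam x = 0 := by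
      intro x hx
      obtain ⟨p, rfl⟩ := hψ₁ker x hx
      have hmem : i₁ (μ p) ∈ Z₁ :=
        (le_sup_right : AddMonoidHom.range i₁ ≤ Z₁) ⟨μ p, rfl⟩
      have := hLamZ ⟨i₁ (μ p), hmem⟩
      rw [this]
      exact hvanish ⟨i₁ (μ p), hmem⟩ ⟨p, rfl⟩
    refine ⟨descendHom ψ₁ hψ₁surj Lam hkill, ?_⟩
    intro w
    obtain ⟨x, hx1, hx2⟩ := hsurj₁ (ρ w.1) (σ w.2) (by rw [hπFρ, hπGσ])
    have hψx : ψ₁ x = (iotaRS ρ σ πF πG hcol2 hrow2) w :=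
      Subtype.ext (Prod.ext hx1 hx2)
    rw [← hψx, descendHom_apply]
    obtain ⟨e, hh, hxd, hπe, hπh⟩ := hdec₁ x w.1 w.2 hx1 hx2
    have hmem : x ∈ Z₁ := by
      rw [hxd]; exact memΦ (e, hh)
    have hxΦ : (⟨x, hmem⟩ : ↥Z₁) = Φ' (e, hh) := Subtype.ext hxd
    have h1 := hLamZ ⟨x, hmem⟩
    rw [h1, hxΦ]
    show lamZ (Φ' (e, hh)) = lam w
    rw [descendHom_apply]
    show lam (πE e, πH hh) = lam w
    rw [hπe, hπh]
  -- second coordinate correction map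
  have memfD1 : ∀ p : P, ((-(i₁.comp μ)).prod (0 : P →+ X₂)) p ∈ D₀ := fun p =>
    ⟨show m₁ (-(i₁ (μ p))) = m₂ 0 by rw [map_neg, hmi₁, neg_zero, map_zero],
     show n₁ (-(i₁ (μ p))) = n₂ 0 by rw [map_neg, hn₁iμ, neg_zero, map_zero]⟩
  let e₁D : P →+ ↥D₀ := AddMonoidHom.codRestrict ((-(i₁.comp μ)).prod (0 : P →+ X₂)) _ memfD1
  have he₁D : ∀ p, (e₁D p : X₁ × X₂) = (-(i₁ (μ p)), 0) := fun p => rfl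
  have hqe₁D : ∀ p, qD (e₁D p) = fD p := by
    intro p
    have hsub : e₂D p - e₁D p = νD p := by
      apply Subtype.ext
      apply Prod.ext
      · show (0 : X₁) - -(i₁ (μ p)) = i₁ (μ p)
        rw [zero_sub, neg_neg]
      · show i₂ (μ p) - 0 = i₂ (μ p)
        rw [sub_zero]
    have h0 : qD (e₂D p - e₁D p) = 0 := by rw [hsub]; exact (hqD0 _).2 ⟨p, rfl⟩
    rw [map_sub, sub_eq_zero] at h0
    exact h0.symm
  -- the extension class of D vanishes
  have h1 : (Abelian.Ext.mk₀ T.f).comp hDcx.extClass (zero_add 1) = 0 := by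
    have hfeq : T.f = AddCommGrpCat.ofHom τ ≫ Dcx.g := by
      ext w
      exact (hτ w).symm
    erw [hfeq, ← Abelian.Ext.mk₀_comp_mk₀, Abelian.Ext.comp_assoc_of_second_deg_zero,
      hDcx.comp_extClass, Abelian.Ext.comp_zero]
  obtain ⟨c, hc⟩ := Abelian.Ext.contravariant_sequence_exact₂ hT (AddCommGrpCat.of P)
    hDcx.extClass h1
  obtain ⟨lam, hlam⟩ := halpha c
  obtain ⟨Lbar, hLbar⟩ := hLam lam
  have hc0 : alphaMap (P := P) ρ σ πF πG hρ hσ hπF hπG hcol2 hrow2 lam = 0 := by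
    show (pullbackShortComplex_shortExact ρ σ πF πG hρ hσ hπF hπG
      hcol2 hrow2).extClass.comp (Abelian.Ext.mk₀ (AddCommGrpCat.ofHom lam)) (add_zero 1) = 0
    have hLf : AddCommGrpCat.ofHom lam = T.f ≫ AddCommGrpCat.ofHom Lbar := by
      ext w
      exact (hLbar w).symm
    erw [hLf, ← Abelian.Ext.mk₀_comp_mk₀, ← Abelian.Ext.comp_assoc_of_second_deg_zero,
      hT.extClass_comp, Abelian.Ext.zero_comp]
  have hclass : hDcx.extClass = 0 := by
    erw [← hc, ← hlam, hc0, Abelian.Ext.comp_zero]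
    rfl
  -- extract a concrete splitting
  obtain ⟨sD, hsD⟩ := exists_section_of_extClass_eq_zero hDcx hclass
  let σD : ↥Yt →+ D := sD.hom
  have hsec : ∀ y : ↥Yt, gD (σD y) = y := fun y => congrArg (fun f => AddCommGrpCat.Hom.hom f y) hsD
  -- the graph subgroup X'
  let X' : AddSubgroup ↥D₀ := AddMonoidHom.eqLocus qD (σD.comp (ψ₁.comp prD₁))
  have hX'mem : ∀ z : ↥D₀, z ∈ X' ↔ qD z = σD (ψ₁ (prD₁ z)) := fun z => Iff.rfl
  let pr₁' : ↥X' →+ X₁ := prD₁.comp X'.subtype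
  let pr₂' : ↥X' →+ X₂ := prD₂.comp X'.subtype
  have hb₁ : Function.Bijective pr₁' := by
    constructor
    · intro a b hab
      have hz : qD (↑a - ↑b) = 0 := by
        rw [map_sub, (hX'mem _).1 a.2, (hX'mem _).1 b.2]
        have : prD₁ (a : ↥D₀) = prD₁ (b : ↥D₀) := hab
        rw [this, sub_self]
      obtain ⟨p, hp⟩ := (hqD0 _).1 hz
      have hfst : i₁ (μ p) = pr₁' a - pr₁' b := congrArg Prod.fst (congrArg Subtype.val hp)
      have hμp : μ p = 0 := hi₁ (by rw [hfst, hab, sub_self, map_zero])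
      have hνD0 : νD p = 0 := by
        apply Subtype.ext
        apply Prod.ext
        · show i₁ (μ p) = 0
          rw [hμp, map_zero]
        · show i₂ (μ p) = 0
          rw [hμp, map_zero]
      have : (a : ↥D₀) - (b : ↥D₀) = 0 := by rw [← hp, hνD0]
      exact Subtype.ext (sub_eq_zero.1 this)
    · intro x
      obtain ⟨b2, hb21, hb22⟩ := hsurj₂ (m₁ x) (n₁ x) (DFunLike.congr_fun hsq4₁ x)
      set z₀ : ↥D₀ := ⟨(x, b2), ⟨hb21.symm, hb22.symm⟩⟩ with hz₀
      have hker : gD (qD z₀ - σD (ψ₁ x)) = 0 := by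
        rw [map_sub, hgDq, hsec]
        show ψ₁ x - ψ₁ x = 0
        rw [sub_self]
      obtain ⟨p, hp⟩ := hexactD _ hker
      have h5 : prD₁ (z₀ - e₂D p) = x := by
        show x - 0 = x
        exact sub_zero x
      have hmem : z₀ - e₂D p ∈ X' := by
        rw [hX'mem, h5, map_sub]
        show qD z₀ - fD p = σD (ψ₁ x)
        rw [hp]
        abel
      exact ⟨⟨z₀ - e₂D p, hmem⟩, h5⟩
  have hb₂ : Function.Bijective pr₂' := by
    constructor
    · intro a b hab
      have hsnd0 : prD₂ ((a : ↥D₀) - ↑b) = 0 := by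
        rw [map_sub]
        have : prD₂ (a : ↥D₀) = prD₂ (b : ↥D₀) := hab
        rw [this, sub_self]
      have hm0 : m₁ (prD₁ ((a : ↥D₀) - ↑b)) = 0 := by
        show m₁ ((((a : ↥D₀) - ↑b : ↥D₀) : X₁ × X₂)).1 = 0
        rw [((a : ↥D₀) - ↑b).2.1]
        show m₂ (prD₂ ((a : ↥D₀) - ↑b)) = 0
        rw [hsnd0, map_zero]
      have hn0 : n₁ (prD₁ ((a : ↥D₀) - ↑b)) = 0 := by
        show n₁ ((((a : ↥D₀) - ↑b : ↥D₀) : X₁ × X₂)).1 = 0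
        rw [((a : ↥D₀) - ↑b).2.2]
        show n₂ (prD₂ ((a : ↥D₀) - ↑b)) = 0
        rw [hsnd0, map_zero]
      have hψ0 : ψ₁ (prD₁ ((a : ↥D₀) - ↑b)) = 0 :=
        Subtype.ext (Prod.ext hm0 hn0)
      have hz : qD (↑a - ↑b) = 0 := by
        rw [map_sub, (hX'mem _).1 a.2, (hX'mem _).1 b.2, ← map_sub, ← map_sub, ← map_sub,
          hψ0, map_zero]
      obtain ⟨p, hp⟩ := (hqD0 _).1 hz
      have hsnd : i₂ (μ p) = prD₂ ((a : ↥D₀) - ↑b) := congrArg Prod.snd (congrArg Subtype.val hp)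
      have hμp : μ p = 0 := hi₂ (by rw [hsnd, hsnd0, map_zero])
      have hνD0 : νD p = 0 := by
        apply Subtype.ext
        apply Prod.ext
        · show i₁ (μ p) = 0
          rw [hμp, map_zero]
        · show i₂ (μ p) = 0
          rw [hμp, map_zero]
      have : (a : ↥D₀) - (b : ↥D₀) = 0 := by rw [← hp, hνD0]
      exact Subtype.ext (sub_eq_zero.1 this)
    · intro y
      obtain ⟨x, hx1, hx2⟩ := hsurj₁ (m₂ y) (n₂ y) (DFunLike.congr_fun hsq4₂ y)
      set z₀ : ↥D₀ := ⟨(x, y), ⟨hx1, hx2⟩⟩ with hz₀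
      have hker : gD (qD z₀ - σD (ψ₁ x)) = 0 := by
        rw [map_sub, hgDq, hsec]
        show ψ₁ x - ψ₁ x = 0
        rw [sub_self]
      obtain ⟨p, hp⟩ := hexactD _ hker
      have h5 : prD₂ (z₀ - e₁D p) = y := by
        show y - 0 = y
        exact sub_zero y
      have h6 : prD₁ (z₀ - e₁D p) = x + i₁ (μ p) := by
        show x - -(i₁ (μ p)) = x + i₁ (μ p)
        rw [sub_neg_eq_add]
      have hmem : z₀ - e₁D p ∈ X' := by
        rw [hX'mem, h6, map_sub, hqe₁D, map_add, hψ₁iμ, add_zero]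
        show qD z₀ - fD p = σD (ψ₁ x)
        rw [hp]
        abel
      exact ⟨⟨z₀ - e₁D p, hmem⟩, h5⟩
  let φ₀ : X₁ ≃+ X₂ := (AddEquiv.ofBijective pr₁' hb₁).symm.trans (AddEquiv.ofBijective pr₂' hb₂)
  have hφ₀z : ∀ z : ↥X', φ₀ (pr₁' z) = pr₂' z := by
    intro z
    show (AddEquiv.ofBijective pr₂' hb₂) ((AddEquiv.ofBijective pr₁' hb₁).symm (pr₁' z)) = pr₂' z
    have h6 : (AddEquiv.ofBijective pr₁' hb₁).symm (pr₁' z) = z :=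
      (AddEquiv.ofBijective pr₁' hb₁).symm_apply_apply z
    rw [h6]
    rfl
  have hφ₀mn : ∀ x, m₂ (φ₀ x) = m₁ x ∧ n₂ (φ₀ x) = n₁ x := by
    intro x
    obtain ⟨z, hz⟩ := hb₁.2 x
    rw [← hz, hφ₀z z]
    exact ⟨((z : ↥D₀)).2.1.symm, ((z : ↥D₀)).2.2.symm⟩
  have hφ₀P : ∀ p, φ₀ (i₁ (μ p)) = i₂ (μ p) := by
    intro p
    have hmem : νD p ∈ X' := by
      rw [hX'mem]
      show qD (νD p) = σD (ψ₁ (i₁ (μ p)))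
      rw [(hqD0 _).2 ⟨p, rfl⟩, hψ₁iμ, map_zero]
    exact hφ₀z ⟨νD p, hmem⟩
  -- the correcting homomorphism
  let Φ₂ : E × H →+ X₂ := (j₂.comp (AddMonoidHom.fst E H)) + (i₂.comp (AddMonoidHom.snd E H))
  let χ : E × H →+ X₂ := Φ₂ - (φ₀.toAddMonoidHom.comp Φ₁)
  have hχ : ∀ z : E × H, χ z = (j₂ z.1 + i₂ z.2) - φ₀ (j₁ z.1 + i₁ z.2) := fun z => rfl
  have memχ : ∀ z : E × H, χ z ∈ AddMonoidHom.range (i₂.comp μ) := by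
    rintro ⟨e, h⟩
    have hm : m₂ (χ (e, h)) = 0 := by
      rw [hχ, map_sub, map_add, hmj₂, hmi₂, add_zero, (hφ₀mn _).1, map_add, hmj₁, hmi₁,
        add_zero, sub_self]
    have hn : n₂ (χ (e, h)) = 0 := by
      rw [hχ, map_sub, map_add, hnj₂, hni₂, zero_add, (hφ₀mn _).2, map_add, hnj₁, hni₁,
        zero_add, sub_self]
    obtain ⟨p, hp⟩ := hker₂ _ hm hn
    exact ⟨p, hp.symm⟩
  let κ := AddMonoidHom.ofInjective hiμinj₂
  let χP : E × H →+ P := (κ.symm.toAddMonoidHom).comp (AddMonoidHom.codRestrict χ _ memχ)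
  have hχP : ∀ z, i₂ (μ (χP z)) = χ z := by
    intro z
    show (i₂.comp μ) (κ.symm ⟨χ z, memχ z⟩) = χ z
    rw [AddMonoidHom.apply_ofInjective_symm]
  have hkχ : ∀ z : E × H, Φ' z = 0 → χP z = 0 := by
    intro z hz
    obtain ⟨p, rfl⟩ := hΦ'ker z hz
    have hχ0 : χ (ν p, -μ p) = 0 := by
      rw [hχ]
      show (j₂ (ν p) + i₂ (-μ p)) - φ₀ (j₁ (ν p) + i₁ (-μ p)) = 0
      rw [← hij₂, map_neg, add_neg_cancel, ← hij₁, map_neg, add_neg_cancel, map_zero, sub_zero]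
    apply hiμinj₂
    show (i₂.comp μ) (χP (ν p, -μ p)) = (i₂.comp μ) 0
    rw [map_zero]
    exact (hχP _).trans hχ0
  let lamZ₂ : ↥Z₁ →+ P := descendHom Φ' hΦ'surj χP hkχ
  have hvan₂ : ∀ x : ↥Z₁, (x : X₁) ∈ AddMonoidHom.range (i₁.comp μ) → lamZ₂ x = 0 := by
    rintro x ⟨p, hp⟩
    have hx : x = Φ' (0, μ p) := by
      apply Subtype.ext
      show (x : X₁) = j₁ 0 + i₁ (μ p)
      rw [map_zero, zero_add, ← hp]
      rfl
    rw [hx]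
    show lamZ₂ (Φ' (0, μ p)) = 0
    rw [descendHom_apply]
    have hχ0 : χ (0, μ p) = 0 := by
      rw [hχ]
      show (j₂ 0 + i₂ (μ p)) - φ₀ (j₁ 0 + i₁ (μ p)) = 0
      rw [map_zero, zero_add, map_zero, zero_add, hφ₀P, sub_self]
    apply hiμinj₂
    show (i₂.comp μ) (χP (0, μ p)) = (i₂.comp μ) 0
    rw [map_zero]
    exact (hχP _).trans hχ0
  obtain ⟨Λ, hΛ⟩ := hext lamZ₂ hvan₂
  let φh : X₁ →+ X₂ := φ₀.toAddMonoidHom + (i₂.comp μ).comp Λ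
  have hφh : ∀ x, φh x = φ₀ x + i₂ (μ (Λ x)) := fun x => rfl
  have hΛΦ : ∀ z : E × H, Λ (Φ₁ z) = χP z := by
    intro z
    have h8 := hΛ (Φ' z)
    have h9 : lamZ₂ (Φ' z) = χP z := descendHom_apply _ _ _ _ z
    exact h8.trans h9
  have hφj : ∀ e, φh (j₁ e) = j₂ e := by
    intro e
    have h10 : j₁ e = Φ₁ (e, 0) := by
      show j₁ e = j₁ e + i₁ 0
      rw [map_zero, add_zero]
    have h11 : Λ (j₁ e) = χP (e, 0) := by rw [h10]; exact hΛΦ (e, 0)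
    rw [hφh, h11, hχP, hχ]
    show φ₀ (j₁ e) + ((j₂ e + i₂ 0) - φ₀ (j₁ e + i₁ 0)) = j₂ e
    rw [map_zero, add_zero, map_zero, add_zero]
    abel
  have hφi : ∀ h, φh (i₁ h) = i₂ h := by
    intro h
    have h10 : i₁ h = Φ₁ (0, h) := by
      show i₁ h = j₁ 0 + i₁ h
      rw [map_zero, zero_add]
    have h11 : Λ (i₁ h) = χP (0, h) := by rw [h10]; exact hΛΦ (0, h)
    rw [hφh, h11, hχP, hχ]
    show φ₀ (i₁ h) + ((j₂ 0 + i₂ h) - φ₀ (j₁ 0 + i₁ h)) = i₂ h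
    rw [map_zero, zero_add, map_zero, zero_add]
    abel
  have hφm : ∀ x, m₂ (φh x) = m₁ x := by
    intro x
    rw [hφh, map_add, hmi₂, add_zero, (hφ₀mn x).1]
  have hφn : ∀ x, n₂ (φh x) = n₁ x := by
    intro x
    rw [hφh, map_add, hn₂iμ, add_zero, (hφ₀mn x).2]
  have hφinj : Function.Injective φh := by
    intro a b hab
    have h12 : φh (a - b) = 0 := by rw [map_sub, hab, sub_self]
    have h13 : m₁ (a - b) = 0 := by rw [← hφm, h12, map_zero]
    have h14 : n₁ (a - b) = 0 := by rw [← hφn, h12, map_zero]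
    obtain ⟨p, hp⟩ := hker₁ _ h13 h14
    have h15 : i₂ (μ p) = 0 := by
      rw [← hφi (μ p), ← hp, h12]
    have hμp : μ p = 0 := hi₂ (by rw [h15, map_zero])
    have : a - b = 0 := by rw [hp, hμp, map_zero]
    exact sub_eq_zero.1 this
  have hφsurj : Function.Surjective φh := by
    intro y
    obtain ⟨x, hx1, hx2⟩ := hsurj₁ (m₂ y) (n₂ y) (DFunLike.congr_fun hsq4₂ y)
    have h16 : m₂ (y - φh x) = 0 := by rw [map_sub, hφm, hx1, sub_self]
    have h17 : n₂ (y - φh x) = 0 := by rw [map_sub, hφn, hx2, sub_self]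
    obtain ⟨p, hp⟩ := hker₂ _ h16 h17
    refine ⟨x + i₁ (μ p), ?_⟩
    rw [map_add, hφi, ← hp]
    abel
  exact ⟨AddEquiv.ofBijective φh ⟨hφinj, hφsurj⟩, hφi, hφj, hφm, hφn⟩
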